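/- arXiv:1606.01647 — 2 statements merged into one kernel-verified Lean document; each statement's English description precedes it below -/
import Mathlib

section
/- Let M be a left R-module such that M has infinitely many nontrivial submodules and the clique number ω(M) of the intersection graph G(M) is finite. Then the chromatic number χ(M) of G(M) equals ω(M); that is, there exists a proper coloring of G(M) using exactly ω(M) colors, and no proper coloring with fewer colors exists. -/
universe u v

/-- A clique of the intersection graph `G(M)`: a set of nontrivial submodules any two
distinct members of which have nonzero intersection. -/
def IsIntClique {R : Type u} [Ring R] {M : Type v} [AddCommGroup M] [Module R M]
    (C : Set (Submodule R M)) : Prop :=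
  (∀ N ∈ C, N ≠ ⊥ ∧ N ≠ ⊤) ∧ ∀ N ∈ C, ∀ K ∈ C, N ≠ K → N ⊓ K ≠ ⊥

/-- The clique number `ω(M)` of `G(M)`: the supremum of the cardinalities of cliques. -/
noncomputable def cliqueNumber (R : Type u) [Ring R] (M : Type v) [AddCommGroup M]
    [Module R M] : Cardinal.{v} :=
  sSup {c : Cardinal | ∃ C : Set (Submodule R M), IsIntClique C ∧ c = Cardinal.mk C}

/-- A proper coloring of `G(M)` by a type `α`: a map on nontrivial submodules giving
distinct values to distinct submodules with nonzero intersection. -/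
def IsProperColoring {R : Type u} [Ring R] {M : Type v} [AddCommGroup M] [Module R M]
    {α : Type*} (f : {N : Submodule R M // N ≠ ⊥ ∧ N ≠ ⊤} → α) : Prop :=
  ∀ N K : {N : Submodule R M // N ≠ ⊥ ∧ N ≠ ⊤},
    N ≠ K → (N : Submodule R M) ⊓ (K : Submodule R M) ≠ ⊥ → f N ≠ f K

/-- The chromatic number `χ(M)` of `G(M)`: the least cardinality of a set of colors
admitting a proper coloring. -/
noncomputable def chromaticNumber (R : Type u) [Ring R] (M : Type v) [AddCommGroup M]
    [Module R M] : Cardinal.{v} :=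
  sInf {c : Cardinal | ∃ (α : Type v) (f : {N : Submodule R M // N ≠ ⊥ ∧ N ≠ ⊤} → α),
    IsProperColoring f ∧ c = Cardinal.mk α}

section Aux

variable {R : Type u} [Ring R] {M : Type v} [AddCommGroup M] [Module R M]

lemma intClique_bddAbove :
    BddAbove {c : Cardinal | ∃ C : Set (Submodule R M), IsIntClique C ∧ c = Cardinal.mk C} := by
  refine ⟨Cardinal.mk (Submodule R M), ?_⟩
  rintro c ⟨C', -, rfl⟩
  exact Cardinal.mk_set_le _

lemma intClique_finite (homega : cliqueNumber R M < Cardinal.aleph0)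
    {C : Set (Submodule R M)} (hC : IsIntClique C) : C.Finite := by
  have h1 : Cardinal.mk C ≤ cliqueNumber R M := le_csSup intClique_bddAbove ⟨C, hC, rfl⟩
  exact Cardinal.lt_aleph0_iff_set_finite.mp (h1.trans_lt homega)

lemma exists_atom_le' (homega : cliqueNumber R M < Cardinal.aleph0) :
    ∀ N : Submodule R M, N ≠ ⊥ → ∃ E : Submodule R M, IsAtom E ∧ E ≤ N := by
  by_contra h
  push_neg at h
  obtain ⟨N, hN, hno⟩ := h
  have step : ∀ X : Submodule R M, X ≠ ⊥ → X ≤ N → ∃ Y : Submodule R M, Y ≠ ⊥ ∧ Y < X := by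
    intro X hX hXN
    by_contra hc
    push_neg at hc
    exact hno X ⟨hX, fun b hb => by_contra fun hb0 => (hc b hb0) hb⟩ hXN
  have stepT : ∀ x : {X : Submodule R M // X ≠ ⊥ ∧ X ≤ N},
      ∃ y : {X : Submodule R M // X ≠ ⊥ ∧ X ≤ N}, y.1 < x.1 := by
    rintro ⟨X, hX, hXN⟩
    obtain ⟨Y, hY0, hYX⟩ := step X hX hXN
    exact ⟨⟨Y, hY0, hYX.le.trans hXN⟩, hYX⟩
  choose nxt hnxt using stepT
  set f : ℕ → {X : Submodule R M // X ≠ ⊥ ∧ X ≤ N} :=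
    fun n => nxt^[n] ⟨N, hN, le_rfl⟩ with hfdef
  have hsucc : ∀ n, (f (n + 1)).1 < (f n).1 := by
    intro n
    have h1 : f (n + 1) = nxt (f n) := Function.iterate_succ_apply' _ _ _
    rw [h1]
    exact hnxt _
  have hanti : StrictAnti fun n => (f n).1 := strictAnti_nat_of_succ_lt hsucc
  have hinj : Function.Injective fun n => (f (n + 1)).1 := by
    intro a b hab
    exact Nat.succ_injective (hanti.injective hab)
  have hclique : IsIntClique (Set.range fun n => (f (n + 1)).1) := by
    constructor
    · rintro _ ⟨n, rfl⟩
      exact ⟨(f (n + 1)).2.1, ne_top_of_lt (hsucc n)⟩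
    · rintro _ ⟨a, rfl⟩ _ ⟨b, rfl⟩ hne hbot
      rcases le_total a b with h | h
      · rw [inf_eq_right.mpr (hanti.antitone (Nat.add_le_add_right h 1))] at hbot
        exact (f (b + 1)).2.1 hbot
      · rw [inf_eq_left.mpr (hanti.antitone (Nat.add_le_add_right h 1))] at hbot
        exact (f (a + 1)).2.1 hbot
  exact Set.infinite_range_of_injective hinj (intClique_finite homega hclique)

lemma star_clique {E : Submodule R M} (hE : E ≠ ⊥) :
    IsIntClique {N : Submodule R M | (N ≠ ⊥ ∧ N ≠ ⊤) ∧ E ≤ N} := by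
  constructor
  · rintro N ⟨hN, -⟩; exact hN
  · rintro N ⟨-, hEN⟩ K ⟨-, hEK⟩ - hbot
    exact hE (le_bot_iff.mp (hbot ▸ le_inf hEN hEK))

lemma atoms_infinite (hinf : {N : Submodule R M | N ≠ ⊥ ∧ N ≠ ⊤}.Infinite)
    (homega : cliqueNumber R M < Cardinal.aleph0) :
    {E : Submodule R M | IsAtom E}.Infinite := by
  intro hfin
  apply hinf
  have hsub : {N : Submodule R M | N ≠ ⊥ ∧ N ≠ ⊤} ⊆
      ⋃ E ∈ {E : Submodule R M | IsAtom E}, {N | (N ≠ ⊥ ∧ N ≠ ⊤) ∧ E ≤ N} := by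
    intro N hN
    obtain ⟨E, hE, hle⟩ := exists_atom_le' homega N hN.1
    exact Set.mem_biUnion hE ⟨hN, hle⟩
  exact ((hfin.biUnion fun E hE => intClique_finite homega (star_clique hE.1))).subset hsub

lemma pigeon' {X : Type*} {S T : Set X} (g : X → X) (hS : S.Infinite) (hT : T.Finite)
    (hg : ∀ x ∈ S, g x ∈ T) : ∃ t ∈ T, {x | x ∈ S ∧ g x = t}.Infinite := by
  by_contra h
  push_neg at h
  apply hS
  have hsub : S ⊆ ⋃ t ∈ T, {x | x ∈ S ∧ g x = t} := fun x hx =>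
    Set.mem_biUnion (hg x hx) ⟨hx, rfl⟩
  exact (hT.biUnion fun t ht => h t ht).subset hsub

lemma atom_inf_eq_bot {Z D : Submodule R M} (hZ : IsAtom Z) (h : ¬ Z ≤ D) : Z ⊓ D = ⊥ := by
  rcases lt_or_eq_of_le (inf_le_left : Z ⊓ D ≤ Z) with h' | h'
  · exact hZ.2 _ h'
  · exact absurd (inf_eq_left.mp h') h

lemma no_inf_atoms (homega : cliqueNumber R M < Cardinal.aleph0)
    {C Z : Submodule R M} (hCtop : C ≠ ⊤) (hZ : Z ≠ ⊥) (hZC : Z ⊓ C = ⊥)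
    (hA : {E : Submodule R M | IsAtom E ∧ E ≤ C}.Infinite) : False := by
  have hmod : ∀ E : Submodule R M, E ≤ C → (E ⊔ Z) ⊓ C = E := by
    intro E hE
    rw [sup_inf_assoc_of_le Z hE, hZC, sup_bot_eq]
  have hinj : Set.InjOn (fun E => E ⊔ Z) {E : Submodule R M | IsAtom E ∧ E ≤ C} := by
    intro E hE E' hE' hEE
    have hEE' : E ⊔ Z = E' ⊔ Z := hEE
    calc E = (E ⊔ Z) ⊓ C := (hmod E hE.2).symm
      _ = (E' ⊔ Z) ⊓ C := by rw [hEE']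
      _ = E' := hmod E' hE'.2
  have hclique : IsIntClique ((fun E => E ⊔ Z) '' {E : Submodule R M | IsAtom E ∧ E ≤ C}) := by
    constructor
    · rintro _ ⟨E, hE, rfl⟩
      refine ⟨fun hb => hZ (le_bot_iff.mp (hb ▸ le_sup_right)), fun ht => ?_⟩
      have ht' : E ⊔ Z = ⊤ := ht
      have hCE : C = E := by rw [← hmod E hE.2, ht', top_inf_eq]
      obtain ⟨E', hE'⟩ := (hA.diff (Set.finite_singleton E)).nonempty
      have hle : E' ≤ E := hCE ▸ hE'.1.2
      rcases lt_or_eq_of_le hle with h' | h'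
      · exact hE'.1.1.1 (hE.1.2 _ h')
      · exact hE'.2 h'
    · rintro _ ⟨E, hE, rfl⟩ _ ⟨E', hE', rfl⟩ hne hbot
      exact hZ (le_bot_iff.mp (hbot ▸ le_inf le_sup_right le_sup_right))
  exact (hA.image hinj) (intClique_finite homega hclique)

lemma atom_le_sup_atoms (hinf : {N : Submodule R M | N ≠ ⊥ ∧ N ≠ ⊤}.Infinite)
    (homega : cliqueNumber R M < Cardinal.aleph0) {E₁ E₂ : Submodule R M}
    (h1 : IsAtom E₁) (h2 : IsAtom E₂) (hne : E₁ ≠ E₂) :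
    ∀ Z : Submodule R M, IsAtom Z → Z ≤ E₁ ⊔ E₂ := by
  intro Z hZ
  by_cases hD : E₁ ⊔ E₂ = ⊤
  · rw [hD]; exact le_top
  by_contra hZD
  by_cases hP : {E : Submodule R M | IsAtom E ∧ E ≤ E₁ ⊔ E₂}.Infinite
  · exact no_inf_atoms homega hD hZ.1 (atom_inf_eq_bot hZ hZD) hP
  · have hBinf : {Y : Submodule R M | IsAtom Y ∧ ¬ Y ≤ E₁ ⊔ E₂}.Infinite := by
      refine ((atoms_infinite hinf homega).diff (Set.not_infinite.mp hP)).mono ?_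
      rintro Y ⟨hY1, hY2⟩
      exact ⟨hY1, fun hle => hY2 ⟨hY1, hle⟩⟩
    have hstar : ∀ Y ∈ {Y : Submodule R M | IsAtom Y ∧ ¬ Y ≤ E₁ ⊔ E₂},
        (fun Y => E₁ ⊔ Y) Y ∈ {N : Submodule R M | (N ≠ ⊥ ∧ N ≠ ⊤) ∧ E₁ ≤ N} := by
      rintro Y ⟨hY, hYD⟩
      have hYbot : Y ⊓ (E₁ ⊔ E₂) = ⊥ := atom_inf_eq_bot hY hYD
      have hmod : (E₁ ⊔ Y) ⊓ (E₁ ⊔ E₂) = E₁ := by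
        rw [sup_inf_assoc_of_le Y le_sup_left, hYbot, sup_bot_eq]
      refine ⟨⟨fun hb => h1.1 (le_bot_iff.mp (hb ▸ le_sup_left)), fun ht => ?_⟩, le_sup_left⟩
      have ht' : E₁ ⊔ Y = ⊤ := ht
      rw [ht', top_inf_eq] at hmod
      have hle : E₂ ≤ E₁ := hmod ▸ le_sup_right
      rcases lt_or_eq_of_le hle with h' | h'
      · exact h2.1 (h1.2 _ h')
      · exact hne h'.symm
    obtain ⟨Cs, hCs, hfib⟩ := pigeon' (fun Y => E₁ ⊔ Y) hBinf
      (intClique_finite homega (star_clique h1.1)) hstar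
    obtain ⟨Y₀, hY₀⟩ := hfib.nonempty
    have hCsD : Cs ⊓ (E₁ ⊔ E₂) = E₁ := by
      have hYbot : Y₀ ⊓ (E₁ ⊔ E₂) = ⊥ := atom_inf_eq_bot hY₀.1.1 hY₀.1.2
      have h3 : E₁ ⊔ Y₀ = Cs := hY₀.2
      rw [← h3, sup_inf_assoc_of_le Y₀ le_sup_left, hYbot, sup_bot_eq]
    have hE2Cs : ¬ E₂ ≤ Cs := by
      intro hle
      have h3 : E₂ ≤ E₁ := hCsD ▸ le_inf hle le_sup_right
      rcases lt_or_eq_of_le h3 with h' | h'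
      · exact h2.1 (h1.2 _ h')
      · exact hne h'.symm
    have hACs : {E : Submodule R M | IsAtom E ∧ E ≤ Cs}.Infinite := by
      refine hfib.mono ?_
      rintro Y ⟨⟨hY, -⟩, hYC⟩
      exact ⟨hY, hYC ▸ (le_sup_right : Y ≤ E₁ ⊔ Y)⟩
    exact no_inf_atoms homega hCs.1.2 h2.1 (atom_inf_eq_bot h2 hE2Cs) hACs

end Aux

/-- If `M` has infinitely many nontrivial submodules and finite clique number
`ω(M)`, then `χ(M) = ω(M)`: there is a proper coloring with exactly `ω(M)` colors and none
with fewer. -/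
theorem statement16 {R : Type u} [Ring R] {M : Type v} [AddCommGroup M] [Module R M]
    (hinf : {N : Submodule R M | N ≠ ⊥ ∧ N ≠ ⊤}.Infinite)
    (homega : cliqueNumber R M < Cardinal.aleph0) :
    chromaticNumber R M = cliqueNumber R M ∧
    (∃ (α : Type v) (f : {N : Submodule R M // N ≠ ⊥ ∧ N ≠ ⊤} → α),
      IsProperColoring f ∧ Cardinal.mk α = cliqueNumber R M) := by
  classical
  choose atF hatF1 hatF2 using exists_atom_le' homega
  set W : Set (Submodule R M) :=
    {N | (N ≠ ⊥ ∧ N ≠ ⊤) ∧ ∃ E₁ E₂ : Submodule R M,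
      IsAtom E₁ ∧ IsAtom E₂ ∧ E₁ ≠ E₂ ∧ E₁ ≤ N ∧ E₂ ≤ N} with hWdef
  have adjW : ∀ U ∈ W, ∀ G : Submodule R M, IsAtom G → G ≤ U := by
    rintro U ⟨-, E₁, E₂, h1, h2, hne, hle1, hle2⟩ G hG
    exact le_trans (atom_le_sup_atoms hinf homega h1 h2 hne G hG) (sup_le hle1 hle2)
  have uniq : ∀ N : Submodule R M, (N ≠ ⊥ ∧ N ≠ ⊤) → N ∉ W →
      ∀ G G' : Submodule R M, IsAtom G → IsAtom G' → G ≤ N → G' ≤ N → G = G' := by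
    intro N hN hNW G G' hG hG' hle hle'
    by_contra hgg
    exact hNW ⟨hN, G, G', hG, hG', hgg, hle, hle'⟩
  set S : Submodule R M → Set (Submodule R M) := fun E =>
    {N | ∃ hV : N ≠ ⊥ ∧ N ≠ ⊤, N ∉ W ∧ atF N hV.1 = E} with hSdef
  have hSclique : ∀ E : Submodule R M, IsIntClique (S E) := by
    intro E
    constructor
    · rintro N ⟨hV, -⟩; exact hV
    · rintro N ⟨hVN, -, hatN⟩ K ⟨hVK, -, hatK⟩ - hbot
      have hl1 : E ≤ N := by rw [← hatN]; exact hatF2 N hVN.1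
      have hl2 : E ≤ K := by rw [← hatK]; exact hatF2 K hVK.1
      have hEb : E ≠ ⊥ := by rw [← hatN]; exact (hatF1 N hVN.1).1
      exact hEb (le_bot_iff.mp (hbot ▸ le_inf hl1 hl2))
  have hSfin : ∀ E : Submodule R M, (S E).Finite :=
    fun E => intClique_finite homega (hSclique E)
  have hWclique : IsIntClique W := by
    constructor
    · rintro N ⟨hV, -⟩; exact hV
    · intro U hU U' hU' hne hbot
      obtain ⟨-, E₁, E₂, h1, h2, hne12, hle1, hle2⟩ := hU
      have h3 : E₁ ≤ U' := adjW U' hU' E₁ h1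
      exact h1.1 (le_bot_iff.mp (hbot ▸ le_inf hle1 h3))
  have hWfin : W.Finite := intClique_finite homega hWclique
  have hWS : ∀ U ∈ W, ∀ E N, N ∈ S E → U ⊓ N ≠ ⊥ := by
    rintro U hU E N ⟨hVN, hNW, hatN⟩ hbot
    have hG := hatF1 N hVN.1
    have hu1 : atF N hVN.1 ≤ U := adjW U hU _ hG
    have hu2 : atF N hVN.1 ≤ N := hatF2 N hVN.1
    exact hG.1 (le_bot_iff.mp (le_trans (le_inf hu1 hu2) hbot.le))
  obtain ⟨n₀, hn₀⟩ := Cardinal.lt_aleph0.mp homega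
  have hcardBound : ∀ C : Set (Submodule R M), IsIntClique C → Nat.card C ≤ n₀ := by
    intro C hC
    have h1 : Cardinal.mk C ≤ (n₀ : Cardinal) := by
      rw [← hn₀]
      exact le_csSup intClique_bddAbove ⟨C, hC, rfl⟩
    have h2 := Cardinal.toNat_le_toNat h1 (Cardinal.nat_lt_aleph0 n₀)
    rw [Cardinal.toNat_natCast] at h2
    exact h2
  have hmkNat : ∀ T : Set (Submodule R M), T.Finite →
      Cardinal.mk T = ((Nat.card T : ℕ) : Cardinal) := by
    intro T hT
    rw [← Cardinal.cast_toNat_of_lt_aleph0 hT.lt_aleph0]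
    rfl
  set w : ℕ := Nat.card W with hwdef
  set sfun : Submodule R M → ℕ := fun E => Nat.card (S E) with hsfundef
  set KS : Set ℕ := {k | ∃ E : Submodule R M, IsAtom E ∧ sfun E = k} with hKSdef
  have hKSbdd : BddAbove KS := by
    refine ⟨n₀, ?_⟩
    rintro k ⟨E, hE, rfl⟩
    exact hcardBound _ (hSclique E)
  have hKSne : KS.Nonempty := by
    obtain ⟨E₀, hE₀⟩ := (atoms_infinite hinf homega).nonempty
    exact ⟨sfun E₀, E₀, hE₀, rfl⟩
  set s : ℕ := sSup KS with hsdef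
  obtain ⟨Estar, hEstar, hsEq⟩ : s ∈ KS := Nat.sSup_mem hKSne hKSbdd
  have hvertexNe : {N : Submodule R M | N ≠ ⊥ ∧ N ≠ ⊤}.Nonempty := hinf.nonempty
  have hatomVertex : ∀ E : Submodule R M, IsAtom E → (E ≠ ⊥ ∧ E ≠ ⊤) := by
    intro E hE
    refine ⟨hE.1, fun htop => ?_⟩
    obtain ⟨N, hN⟩ := hvertexNe
    have hlt : N < E := by rw [htop]; exact lt_top_iff_ne_top.mpr hN.2
    exact hN.1 (hE.2 N hlt)
  have hselfS : ∀ E : Submodule R M, IsAtom E → E ∈ S E := by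
    intro E hE
    have hV := hatomVertex E hE
    have hEW : E ∉ W := by
      rintro ⟨-, E₁, E₂, h1, h2, hne12, hle1, hle2⟩
      have e1 : E₁ = E := by
        rcases lt_or_eq_of_le hle1 with h | h
        · exact absurd (hE.2 _ h) h1.1
        · exact h
      have e2 : E₂ = E := by
        rcases lt_or_eq_of_le hle2 with h | h
        · exact absurd (hE.2 _ h) h2.1
        · exact h
      exact hne12 (e1.trans e2.symm)
    refine ⟨hV, hEW, ?_⟩
    rcases lt_or_eq_of_le (hatF2 E hV.1) with h | h
    · exact absurd (hE.2 _ h) (hatF1 E hV.1).1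
    · exact h
  have hspos : 0 < s := by
    haveI := (hSfin Estar).to_subtype
    haveI : Nonempty (S Estar) := ⟨⟨Estar, hselfS Estar hEstar⟩⟩
    rw [← hsEq]
    exact Nat.card_pos
  set n : ℕ := w + s with hndef
  set C₀ : Set (Submodule R M) := W ∪ S Estar with hC₀def
  have hdisjAll : ∀ E, Disjoint W (S E) := by
    intro E
    rw [Set.disjoint_right]
    rintro N ⟨-, hNW, -⟩
    exact hNW
  have hC₀clique : IsIntClique C₀ := by
    constructor
    · rintro N (hN | hN)
      · exact hN.1
      · obtain ⟨hV, -, -⟩ := hN; exact hV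
    · rintro N hN K hK hne hbot
      rcases hN with hNW | hNS
      · rcases hK with hKW | hKS
        · exact (hWclique.2 N hNW K hKW hne) hbot
        · exact (hWS N hNW Estar K hKS) hbot
      · rcases hK with hKW | hKS
        · exact (hWS K hKW Estar N hNS) (by rwa [inf_comm] at hbot)
        · exact ((hSclique Estar).2 N hNS K hKS hne) hbot
  have hmkW : Cardinal.mk W = (w : Cardinal) := hmkNat _ hWfin
  have hmkSE : ∀ E : Submodule R M, Cardinal.mk (S E) = ((sfun E : ℕ) : Cardinal) :=
    fun E => hmkNat _ (hSfin E)
  have hmkC₀ : Cardinal.mk C₀ = (n : Cardinal) := by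
    rw [hC₀def, Cardinal.mk_union_of_disjoint (hdisjAll Estar), hmkW, hmkSE, hsEq]
    norm_cast
  have hcliqueLe : ∀ C : Set (Submodule R M), IsIntClique C →
      Cardinal.mk C ≤ (n : Cardinal) := by
    intro C hC
    by_cases hex : ∃ N ∈ C, N ∉ W
    · obtain ⟨N₀, hN₀C, hN₀W⟩ := hex
      have hVN₀ : N₀ ≠ ⊥ ∧ N₀ ≠ ⊤ := hC.1 N₀ hN₀C
      have hsub : C ⊆ W ∪ S (atF N₀ hVN₀.1) := by
        intro K hKC
        by_cases hKW : K ∈ W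
        · exact Or.inl hKW
        · right
          have hVK : K ≠ ⊥ ∧ K ≠ ⊤ := hC.1 K hKC
          by_cases hKN : K = N₀
          · subst hKN
            exact ⟨hVK, hKW, rfl⟩
          · have hbot : K ⊓ N₀ ≠ ⊥ := hC.2 K hKC N₀ hN₀C hKN
            obtain ⟨G, hG, hGle⟩ := exists_atom_le' homega _ hbot
            have e1 : atF K hVK.1 = G :=
              uniq K hVK hKW _ G (hatF1 _ _) hG (hatF2 _ _) (hGle.trans inf_le_left)
            have e2 : atF N₀ hVN₀.1 = G :=
              uniq N₀ hVN₀ hN₀W _ G (hatF1 _ _) hG (hatF2 _ _) (hGle.trans inf_le_right)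
            exact ⟨hVK, hKW, e1.trans e2.symm⟩
      calc Cardinal.mk C ≤ Cardinal.mk ↥(W ∪ S (atF N₀ hVN₀.1)) :=
            Cardinal.mk_le_mk_of_subset hsub
        _ = (w : Cardinal) + Cardinal.mk (S (atF N₀ hVN₀.1)) := by
            rw [Cardinal.mk_union_of_disjoint (hdisjAll _), hmkW]
        _ ≤ (w : Cardinal) + (s : Cardinal) := by
            refine add_le_add (le_refl _) ?_
            rw [hmkSE]
            exact_mod_cast le_csSup hKSbdd ⟨atF N₀ hVN₀.1, hatF1 _ _, rfl⟩
        _ = (n : Cardinal) := by norm_cast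
    · push_neg at hex
      calc Cardinal.mk C ≤ Cardinal.mk W := Cardinal.mk_le_mk_of_subset hex
        _ = (w : Cardinal) := hmkW
        _ ≤ (n : Cardinal) := by exact_mod_cast Nat.le_add_right w s
  have homega_eq : cliqueNumber R M = (n : Cardinal) := by
    apply le_antisymm
    · refine csSup_le ⟨Cardinal.mk C₀, C₀, hC₀clique, rfl⟩ ?_
      rintro c ⟨C, hC, rfl⟩
      exact hcliqueLe C hC
    · rw [← hmkC₀]
      exact le_csSup intClique_bddAbove ⟨C₀, hC₀clique, rfl⟩
  -- the coloring
  haveI hWft : Fintype W := hWfin.fintype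
  have hWcard : Fintype.card W = w := by rw [hwdef, Nat.card_eq_fintype_card]
  have eW : W ↪ Fin w := (Fintype.equivFin W).toEmbedding.trans (finCongr hWcard).toEmbedding
  have eS : ∀ E : Submodule R M, (S E) ↪ Fin s := by
    intro E
    haveI := (hSfin E).fintype
    refine (Fintype.equivFin (S E)).toEmbedding.trans (Fin.castLEEmb ?_)
    rw [← Nat.card_eq_fintype_card]
    by_cases hE : IsAtom E
    · exact le_csSup hKSbdd ⟨E, hE, rfl⟩
    · have hempty : S E = ∅ := by
        ext N
        simp only [Set.mem_empty_iff_false, iff_false]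
        rintro ⟨hV, -, hatN⟩
        exact hE (hatN ▸ hatF1 N hV.1)
      rw [hempty]
      simp
  set cS : Submodule R M → Submodule R M → Fin s := fun E N =>
    if h : N ∈ S E then eS E ⟨N, h⟩ else ⟨0, hspos⟩ with hcSdef
  have hcSinj : ∀ E N K, N ∈ S E → K ∈ S E → cS E N = cS E K → N = K := by
    intro E N K hN hK h
    simp only [hcSdef, dif_pos hN, dif_pos hK] at h
    exact congrArg Subtype.val ((eS E).injective h)
  set f : {N : Submodule R M // N ≠ ⊥ ∧ N ≠ ⊤} → ULift.{v} (Fin n) := fun N =>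
    if h : N.1 ∈ W then ⟨finSumFinEquiv (Sum.inl (eW ⟨N.1, h⟩))⟩
    else ⟨finSumFinEquiv (Sum.inr (cS (atF N.1 N.2.1) N.1))⟩ with hfdef
  have hf : IsProperColoring f := by
    intro N K hNK hbot heq
    by_cases hN : N.1 ∈ W <;> by_cases hK : K.1 ∈ W
    · simp only [hfdef, dif_pos hN, dif_pos hK] at heq
      have hh1 : (Sum.inl (eW ⟨N.1, hN⟩) : Fin w ⊕ Fin s) = Sum.inl (eW ⟨K.1, hK⟩) :=
        finSumFinEquiv.injective (congrArg ULift.down heq)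
      have hh2 := eW.injective (Sum.inl.inj hh1)
      exact hNK (Subtype.ext (congrArg (fun x : W => (x : Submodule R M)) hh2))
    · simp only [hfdef, dif_pos hN, dif_neg hK] at heq
      exact absurd (finSumFinEquiv.injective (congrArg ULift.down heq)) (by simp)
    · simp only [hfdef, dif_neg hN, dif_pos hK] at heq
      exact absurd (finSumFinEquiv.injective (congrArg ULift.down heq)) (by simp)
    · simp only [hfdef, dif_neg hN, dif_neg hK] at heq
      have hEE : atF N.1 N.2.1 = atF K.1 K.2.1 := by
        obtain ⟨G, hG, hGle⟩ := exists_atom_le' homega _ hbot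
        have e1 := uniq N.1 N.2 hN (atF N.1 N.2.1) G (hatF1 N.1 N.2.1) hG
          (hatF2 N.1 N.2.1) (hGle.trans inf_le_left)
        have e2 := uniq K.1 K.2 hK (atF K.1 K.2.1) G (hatF1 K.1 K.2.1) hG
          (hatF2 K.1 K.2.1) (hGle.trans inf_le_right)
        exact e1.trans e2.symm
      have hh1 : cS (atF N.1 N.2.1) N.1 = cS (atF K.1 K.2.1) K.1 :=
        Sum.inr.inj (finSumFinEquiv.injective (congrArg ULift.down heq))
      rw [← hEE] at hh1
      have hNmem : N.1 ∈ S (atF N.1 N.2.1) := ⟨N.2, hN, rfl⟩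
      have hKmem : K.1 ∈ S (atF N.1 N.2.1) := ⟨K.2, hK, hEE.symm⟩
      exact hNK (Subtype.ext (hcSinj _ _ _ hNmem hKmem hh1))
  have hmkα : Cardinal.mk (ULift.{v} (Fin n)) = (n : Cardinal) := by
    rw [Cardinal.mk_uLift, Cardinal.mk_fin, Cardinal.lift_natCast]
  have hχmem : (n : Cardinal) ∈ {c : Cardinal |
      ∃ (β : Type v) (g : {N : Submodule R M // N ≠ ⊥ ∧ N ≠ ⊤} → β),
        IsProperColoring g ∧ c = Cardinal.mk β} :=
    ⟨ULift.{v} (Fin n), f, hf, hmkα.symm⟩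
  have hχlow : ∀ c ∈ {c : Cardinal |
      ∃ (β : Type v) (g : {N : Submodule R M // N ≠ ⊥ ∧ N ≠ ⊤} → β),
        IsProperColoring g ∧ c = Cardinal.mk β}, (n : Cardinal) ≤ c := by
    rintro c ⟨β, g, hg, rfl⟩
    rw [← hmkC₀]
    refine Cardinal.mk_le_of_injective
      (f := fun x : C₀ => g ⟨x.1, hC₀clique.1 x.1 x.2⟩) ?_
    rintro ⟨x, hx⟩ ⟨y, hy⟩ hxy
    by_contra hne
    have hxyne : x ≠ y := fun h => hne (Subtype.ext h)
    have hsubne : (⟨x, hC₀clique.1 x hx⟩ : {N : Submodule R M // N ≠ ⊥ ∧ N ≠ ⊤}) ≠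
        ⟨y, hC₀clique.1 y hy⟩ := fun h => hxyne (congrArg Subtype.val h)
    exact hg _ _ hsubne (hC₀clique.2 x hx y hy hxyne) hxy
  have hχ : chromaticNumber R M = (n : Cardinal) := by
    apply le_antisymm
    · exact csInf_le (OrderBot.bddBelow _) hχmem
    · exact le_csInf ⟨_, hχmem⟩ hχlow
  refine ⟨hχ.trans homega_eq.symm, ULift.{v} (Fin n), f, hf, hmkα.trans homega_eq.symm⟩
end

section
/- Let M be a left R-module in which every nonzero submodule contains a uniform submodule, and suppose ω(M) ≤ ω^c(M) (as cardinals). Then ω^c(M) = χ^c(M); that is, the clique number and the chromatic number of the complement graph G^c(M) of the intersection graph of M coincide. -/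
universe u v

/-- A clique of the complement graph `G^c(M)`: a set of nontrivial submodules any two
distinct members of which have zero intersection. -/
def IsIntCliqueC {R : Type u} [Ring R] {M : Type v} [AddCommGroup M] [Module R M]
    (C : Set (Submodule R M)) : Prop :=
  (∀ N ∈ C, N ≠ ⊥ ∧ N ≠ ⊤) ∧ ∀ N ∈ C, ∀ K ∈ C, N ≠ K → N ⊓ K = ⊥

/-- The clique number `ω^c(M)` of the complement graph `G^c(M)`. -/
noncomputable def cliqueNumberC (R : Type u) [Ring R] (M : Type v) [AddCommGroup M]
    [Module R M] : Cardinal.{v} :=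
  sSup {c : Cardinal | ∃ C : Set (Submodule R M), IsIntCliqueC C ∧ c = Cardinal.mk C}

/-- The chromatic number `χ^c(M)` of the complement graph `G^c(M)`: the least cardinality
of a type of colors for which there is a map on nontrivial submodules giving distinct
values to distinct submodules with zero intersection. -/
noncomputable def chromaticNumberC (R : Type u) [Ring R] (M : Type v) [AddCommGroup M]
    [Module R M] : Cardinal.{v} :=
  sInf {c : Cardinal | ∃ (α : Type v) (f : {N : Submodule R M // N ≠ ⊥ ∧ N ≠ ⊤} → α),
    (∀ N K : {N : Submodule R M // N ≠ ⊥ ∧ N ≠ ⊤},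
      N ≠ K → (N : Submodule R M) ⊓ (K : Submodule R M) = ⊥ → f N ≠ f K) ∧
    c = Cardinal.mk α}

section Aux

variable {R : Type u} [Ring R] {M : Type v} [AddCommGroup M] [Module R M]

lemma cliqueCSet_bddAbove :
    BddAbove {c : Cardinal | ∃ C : Set (Submodule R M), IsIntCliqueC C ∧ c = Cardinal.mk C} := by
  refine ⟨Cardinal.mk (Submodule R M), ?_⟩
  rintro c ⟨C, _, rfl⟩
  exact Cardinal.mk_set_le C

lemma empty_cliqueC :
    (0 : Cardinal.{v}) ∈
      {c : Cardinal | ∃ C : Set (Submodule R M), IsIntCliqueC C ∧ c = Cardinal.mk C} := by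
  refine ⟨∅, ⟨fun N h => h.elim, fun N h => h.elim⟩, ?_⟩
  simp

lemma omegaC_le_chiC : cliqueNumberC R M ≤ chromaticNumberC R M := by
  refine le_csInf ?_ ?_
  · exact ⟨Cardinal.mk {N : Submodule R M // N ≠ ⊥ ∧ N ≠ ⊤},
      {N : Submodule R M // N ≠ ⊥ ∧ N ≠ ⊤}, id, fun N K hne _ => hne, rfl⟩
  · rintro c ⟨α, f, hf, rfl⟩
    refine csSup_le ⟨0, empty_cliqueC⟩ ?_
    rintro c' ⟨C, hC, rfl⟩
    have hinj : Function.Injective (fun N : C => f ⟨N.1, hC.1 N.1 N.2⟩) := by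
      intro N K h
      by_contra hne
      have hne' : N.1 ≠ K.1 := fun h' => hne (Subtype.ext h')
      have hv : (⟨N.1, hC.1 N.1 N.2⟩ : {N : Submodule R M // N ≠ ⊥ ∧ N ≠ ⊤}) ≠
          ⟨K.1, hC.1 K.1 K.2⟩ := fun h' => hne' (by injection h')
      exact hf _ _ hv (hC.2 N.1 N.2 K.1 K.2 hne') h
    exact Cardinal.mk_le_of_injective hinj

end Aux

/-- Let `M` be a module in which every nonzero submodule contains a (nonzero)
uniform submodule, and suppose `ω(M) ≤ ω^c(M)`.  Then `ω^c(M) = χ^c(M)`. -/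
theorem statement17 {R : Type u} [Ring R] {M : Type v} [AddCommGroup M] [Module R M]
    (hu : ∀ N : Submodule R M, N ≠ ⊥ → ∃ U : Submodule R M, U ≤ N ∧ U ≠ ⊥ ∧
      (∀ A B : Submodule R M, A ≤ U → B ≤ U → A ≠ ⊥ → B ≠ ⊥ → A ⊓ B ≠ ⊥))
    (hle : cliqueNumber R M ≤ cliqueNumberC R M) :
    cliqueNumberC R M = chromaticNumberC R M := by
  refine le_antisymm omegaC_le_chiC ?_
  by_cases htop : ∀ A B : Submodule R M, A ≠ ⊥ → B ≠ ⊥ → A ⊓ B ≠ ⊥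
  · -- `M` is uniform
    by_cases hvx : ∃ N : Submodule R M, N ≠ ⊥ ∧ N ≠ ⊤
    · obtain ⟨N0, hN0⟩ := hvx
      have h1 : chromaticNumberC R M ≤ 1 := by
        refine csInf_le' ⟨PUnit, fun _ => PUnit.unit, ?_, (Cardinal.mk_punit).symm⟩
        intro N K hne hbot
        exact absurd hbot (htop N.1 K.1 N.2.1 K.2.1)
      have h2 : (1 : Cardinal.{v}) ≤ cliqueNumberC R M := by
        refine le_csSup cliqueCSet_bddAbove ⟨{N0}, ?_, ?_⟩
        · exact ⟨fun N hN => by rw [Set.mem_singleton_iff] at hN; rw [hN]; exact hN0,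
            fun N hN K hK hne => by
              rw [Set.mem_singleton_iff] at hN hK; exact absurd (hN.trans hK.symm) hne⟩
        · simp
      exact h1.trans h2
    · -- no vertices at all
      have h1 : chromaticNumberC R M ≤ 0 := by
        have : IsEmpty {N : Submodule R M // N ≠ ⊥ ∧ N ≠ ⊤} :=
          ⟨fun N => hvx ⟨N.1, N.2⟩⟩
        refine csInf_le' ⟨PEmpty, isEmptyElim, fun N => isEmptyElim N, ?_⟩
        simp
      exact h1.trans zero_le
  · -- `M` is not uniform; build a maximal family of pairwise disjoint uniform submodules
    set Unif : Submodule R M → Prop := fun U =>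
      U ≠ ⊥ ∧ ∀ A B : Submodule R M, A ≤ U → B ≤ U → A ≠ ⊥ → B ≠ ⊥ → A ⊓ B ≠ ⊥ with hUnif
    set S : Set (Set (Submodule R M)) := {C | (∀ U ∈ C, Unif U) ∧
      ∀ U ∈ C, ∀ V ∈ C, U ≠ V → U ⊓ V = ⊥} with hS
    obtain ⟨F, hFS, hFmax⟩ : ∃ F, Maximal (· ∈ S) F := by
      refine zorn_subset S ?_
      intro c hc hchain
      refine ⟨⋃₀ c, ⟨?_, ?_⟩, fun s hs => Set.subset_sUnion_of_mem hs⟩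
      · rintro U ⟨s, hs, hU⟩
        exact (hc hs).1 U hU
      · rintro U ⟨s, hs, hU⟩ V ⟨t, ht, hV⟩ hne
        rcases hchain.total hs ht with h | h
        · exact (hc ht).2 U (h hU) V hV hne
        · exact (hc hs).2 U hU V (h hV) hne
    -- every vertex meets some member of F
    have key : ∀ N : Submodule R M, N ≠ ⊥ → ∃ U ∈ F, N ⊓ U ≠ ⊥ := by
      intro N hN
      obtain ⟨U0, hU0N, hU0ne, hU0unif⟩ := hu N hN
      by_cases hmem : U0 ∈ F
      · exact ⟨U0, hmem, by rw [inf_eq_right.mpr hU0N]; exact hU0ne⟩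
      · by_contra hcon
        push_neg at hcon
        have hbig : F ∪ {U0} ∈ S := by
          constructor
          · rintro U (hU | hU)
            · exact hFS.1 U hU
            · rw [Set.mem_singleton_iff] at hU; rw [hU]; exact ⟨hU0ne, hU0unif⟩
          · rintro U (hU | hU) V (hV | hV) hne
            · exact hFS.2 U hU V hV hne
            · rw [Set.mem_singleton_iff] at hV
              rw [hV]
              rw [inf_comm]
              have := hcon U hU
              have h1 : U0 ⊓ U ≤ N ⊓ U := inf_le_inf_right U hU0N
              rw [this] at h1
              exact le_bot_iff.mp h1
            · rw [Set.mem_singleton_iff] at hU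
              rw [hU]
              have := hcon V hV
              have h1 : U0 ⊓ V ≤ N ⊓ V := inf_le_inf_right V hU0N
              rw [this] at h1
              exact le_bot_iff.mp h1
            · rw [Set.mem_singleton_iff] at hU hV
              exact absurd (hU.trans hV.symm) hne
        have : F ∪ {U0} ⊆ F := hFmax hbig Set.subset_union_left
        exact hmem (this (Set.mem_union_right _ rfl))
    -- F is a clique of the complement graph
    have hFclique : IsIntCliqueC F := by
      constructor
      · intro U hU
        refine ⟨(hFS.1 U hU).1, fun hUtop => ?_⟩
        refine htop fun A B hA hB => ?_
        exact (hFS.1 U hU).2 A B (hUtop ▸ le_top) (hUtop ▸ le_top) hA hB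
      · exact hFS.2
    -- the coloring
    have claim : ∀ N : {N : Submodule R M // N ≠ ⊥ ∧ N ≠ ⊤},
        ∃ U : F, (N : Submodule R M) ⊓ (U : Submodule R M) ≠ ⊥ := by
      intro N
      obtain ⟨U, hUF, hU⟩ := key N.1 N.2.1
      exact ⟨⟨U, hUF⟩, hU⟩
    have hchi : chromaticNumberC R M ≤ Cardinal.mk F := by
      refine csInf_le' ⟨F, fun N => (claim N).choose, ?_, rfl⟩
      intro N K hne hbot hfeq
      set U : Submodule R M := ((claim N).choose : Submodule R M) with hU
      have hUF : U ∈ F := ((claim N).choose).2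
      have hNU : (N : Submodule R M) ⊓ U ≠ ⊥ := (claim N).choose_spec
      have hfeq' : (claim N).choose = (claim K).choose := hfeq
      have hKU : (K : Submodule R M) ⊓ U ≠ ⊥ := by
        have h := (claim K).choose_spec
        rw [← hfeq'] at h
        exact h
      have := (hFS.1 U hUF).2 ((N : Submodule R M) ⊓ U) ((K : Submodule R M) ⊓ U)
        inf_le_right inf_le_right hNU hKU
      refine this (le_bot_iff.mp ?_)
      calc (N : Submodule R M) ⊓ U ⊓ ((K : Submodule R M) ⊓ U)
          ≤ (N : Submodule R M) ⊓ (K : Submodule R M) :=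
            inf_le_inf inf_le_left inf_le_left
        _ = ⊥ := hbot
    have homega : Cardinal.mk F ≤ cliqueNumberC R M :=
      le_csSup cliqueCSet_bddAbove ⟨F, hFclique, rfl⟩
    exact hchi.trans homega
end
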